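/- There exists an F_σ set U ⊆ ω^ω × 2^ω such that each vertical section U_x belongs to the σ-ideal E generated by closed null subsets of 2^ω, and every member of E is contained in some section U_x. -/

import Mathlib

open MeasureTheory

/-- A set is F_σ if it is a countable union of closed sets. -/
def IsFsigma {X : Type*} [TopologicalSpace X] (s : Set X) : Prop :=
  ∃ F : ℕ → Set X, (∀ n, IsClosed (F n)) ∧ s = ⋃ n, F n

/-- Membership in the σ-ideal `E` generated by closed `μ`-null subsets of
Cantor space. -/
def MemClosedNullIdeal (μ : Measure (ℕ → Bool)) (A : Set (ℕ → Bool)) : Prop :=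
  ∃ F : ℕ → Set (ℕ → Bool), (∀ n, IsClosed (F n) ∧ μ (F n) = 0) ∧ A ⊆ ⋃ n, F n

namespace UnivE

/-- Basic cylinder determined by a finite list of bits. -/
def Cyl (s : List Bool) : Set (ℕ → Bool) := {y | ∀ i < s.length, y i = s.getD i false}

lemma isClosed_Cyl (s : List Bool) : IsClosed (Cyl s) := by
  have : Cyl s = ⋂ i ∈ Finset.range s.length, (fun y : ℕ → Bool => y i) ⁻¹' {s.getD i false} := by
    ext y; simp [Cyl]
  rw [this]
  exact isClosed_biInter fun i _ => (isClosed_singleton).preimage (continuous_apply i)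

lemma isOpen_Cyl (s : List Bool) : IsOpen (Cyl s) := by
  have : Cyl s = ⋂ i ∈ Finset.range s.length, (fun y : ℕ → Bool => y i) ⁻¹' {s.getD i false} := by
    ext y; simp [Cyl]
  rw [this]
  exact isOpen_biInter_finset fun i _ => (isOpen_discrete _).preimage (continuous_apply i)

lemma measurableSet_Cyl (s : List Bool) : MeasurableSet (Cyl s) :=
  (isClosed_Cyl s).measurableSet

lemma meas_Cyl (μ : Measure (ℕ → Bool))
    (hμ : ∀ (s : Finset ℕ) (f : ℕ → Bool),
      μ {x : ℕ → Bool | ∀ i ∈ s, x i = f i} = (1 / 2 : ENNReal) ^ s.card) (s : List Bool) :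
    μ (Cyl s) = (2 : ENNReal)⁻¹ ^ s.length := by
  have := hμ (Finset.range s.length) (fun i => s.getD i false)
  simp only [Finset.mem_range, Finset.card_range, one_div] at this
  exact this

lemma key_pow (a b n k : ℕ) (h : a * 2 ^ n ≤ b * 2 ^ k) :
    (a : ENNReal) * (2 : ENNReal)⁻¹ ^ k ≤ (b : ENNReal) * (2 : ENNReal)⁻¹ ^ n := by
  have h2 : ((2 : ENNReal) ^ n) * ((2 : ENNReal)⁻¹ ^ n) = 1 := by
    rw [← ENNReal.inv_pow]
    exact ENNReal.mul_inv_cancel (by positivity) (by simp)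
  have h2k : ((2 : ENNReal) ^ k) * ((2 : ENNReal)⁻¹ ^ k) = 1 := by
    rw [← ENNReal.inv_pow]
    exact ENNReal.mul_inv_cancel (by positivity) (by simp)
  have hc : ((a : ENNReal) * 2 ^ n) ≤ (b : ENNReal) * 2 ^ k := by
    have := (Nat.cast_le (α := ENNReal)).2 h
    push_cast at this
    exact this
  calc (a : ENNReal) * 2⁻¹ ^ k = ((a : ENNReal) * 2 ^ n) * (2⁻¹ ^ n * 2⁻¹ ^ k) := by
        rw [mul_assoc, ← mul_assoc ((2:ENNReal)^n), h2, one_mul]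
    _ ≤ ((b : ENNReal) * 2 ^ k) * (2⁻¹ ^ n * 2⁻¹ ^ k) := mul_le_mul_left hc _
    _ = (b : ENNReal) * 2⁻¹ ^ n := by
        rw [mul_comm ((2:ENNReal)⁻¹^n), ← mul_assoc, mul_assoc ((b:ENNReal)) ((2:ENNReal)^k), h2k]
        ring

lemma Cyl_disj {N : ℕ} {s t : List Bool} (hs : s.length = N) (ht : t.length = N)
    (hst : s ≠ t) : Disjoint (Cyl s) (Cyl t) := by
  rw [Set.disjoint_left]
  intro y hy hy'
  apply hst
  apply List.ext_getElem (hs.trans ht.symm)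
  intro i h1 h2
  have e1 := hy i (by omega)
  have e2 := hy' i (by omega)
  rw [List.getD_eq_getElem s false h1] at e1
  rw [List.getD_eq_getElem t false h2] at e2
  rw [← e1, ← e2]

open Classical in
/-- decode a natural number into a candidate code -/
noncomputable def dec (c : ℕ) : ℕ × Finset (List Bool) :=
  (Encodable.decode c).getD (0, ∅)

/-- The decoded code is admissible at level `m`. -/
def good (m : ℕ) (p : ℕ × Finset (List Bool)) : Prop :=
  (∀ s ∈ p.2, s.length = p.1) ∧ p.2.card * 2 ^ m ≤ 2 ^ p.1

open Classical in
/-- The clopen set coded by `c` at level `m`. -/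
noncomputable def V (m c : ℕ) : Set (ℕ → Bool) :=
  if good m (dec c) then ⋃ s ∈ (dec c).2, Cyl s else ∅

lemma isClosed_V (m c : ℕ) : IsClosed (V m c) := by
  unfold V
  split
  · exact Set.Finite.isClosed_biUnion (Finset.finite_toSet _) (fun s _ => isClosed_Cyl s)
  · exact isClosed_empty

lemma meas_V (μ : Measure (ℕ → Bool))
    (hμ : ∀ (s : Finset ℕ) (f : ℕ → Bool),
      μ {x : ℕ → Bool | ∀ i ∈ s, x i = f i} = (1 / 2 : ENNReal) ^ s.card) (m c : ℕ) :
    μ (V m c) ≤ (2 : ENNReal)⁻¹ ^ m := by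
  unfold V
  split
  · rename_i h
    obtain ⟨hlen, hcard⟩ := h
    calc μ (⋃ s ∈ (dec c).2, Cyl s) ≤ ∑ s ∈ (dec c).2, μ (Cyl s) :=
          measure_biUnion_finset_le _ _
      _ = ∑ s ∈ (dec c).2, (2 : ENNReal)⁻¹ ^ (dec c).1 := by
          apply Finset.sum_congr rfl
          intro s hs
          rw [meas_Cyl μ hμ s, hlen s hs]
      _ = ((dec c).2.card : ENNReal) * (2 : ENNReal)⁻¹ ^ (dec c).1 := by
          rw [Finset.sum_const, nsmul_eq_mul]
      _ ≤ (2 : ENNReal)⁻¹ ^ m := by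
          simpa using key_pow _ 1 m _ (by simpa using hcard)
  · simp

open Classical in
lemma exists_cover (μ : Measure (ℕ → Bool)) [IsFiniteMeasure μ]
    (hμ : ∀ (s : Finset ℕ) (f : ℕ → Bool),
      μ {x : ℕ → Bool | ∀ i ∈ s, x i = f i} = (1 / 2 : ENNReal) ^ s.card)
    {F : Set (ℕ → Bool)} (hF : IsClosed F) (h0 : μ F = 0) (m : ℕ) :
    ∃ (N : ℕ) (S : Finset (List Bool)), (∀ s ∈ S, s.length = N) ∧
      S.card * 2 ^ m ≤ 2 ^ N ∧ F ⊆ ⋃ s ∈ S, Cyl s := by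
  have hlt : μ F < (2 : ENNReal)⁻¹ ^ m := by
    rw [h0]; exact ENNReal.pow_pos (by simp) m
  obtain ⟨O, hFO, hOopen, hOμ⟩ := Set.exists_isOpen_lt_of_lt F _ hlt
  set SN : ℕ → Finset (List Bool) := fun N =>
    (Finset.univ.image (fun f : Fin N → Bool => List.ofFn f)).filter (fun s => Cyl s ⊆ O)
    with hSN
  set D : ℕ → Set (ℕ → Bool) := fun N => ⋃ s ∈ SN N, Cyl s with hD
  have hlen : ∀ N s, s ∈ SN N → s.length = N := by
    intro N s hs
    rw [hSN, Finset.mem_filter, Finset.mem_image] at hs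
    obtain ⟨⟨f, _, rfl⟩, _⟩ := hs
    simp
  have hDsubO : ∀ N, D N ⊆ O := by
    intro N
    apply Set.iUnion₂_subset
    intro s hs
    exact (Finset.mem_filter.1 hs).2
  have hmemD : ∀ N (y : ℕ → Bool), Cyl (List.ofFn (fun i : Fin N => y i)) ⊆ O → y ∈ D N := by
    intro N y hsub
    rw [hD, Set.mem_iUnion₂]
    refine ⟨List.ofFn (fun i : Fin N => y i), ?_, ?_⟩
    · rw [hSN]
      exact Finset.mem_filter.2 ⟨Finset.mem_image.2 ⟨fun i => y i, Finset.mem_univ _, rfl⟩, hsub⟩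
    · intro i hi
      simp only [List.length_ofFn] at hi
      rw [List.getD_eq_getElem _ false (by simpa using hi)]
      simp
  have hmono : Monotone D := by
    apply monotone_nat_of_le_succ
    intro N y hy
    rw [hD, Set.mem_iUnion₂] at hy
    obtain ⟨s, hs, hys⟩ := hy
    apply hmemD
    intro z hz
    have hzy : ∀ i < N + 1, z i = y i := by
      intro i hi
      have := hz i (by simpa using hi)
      rw [List.getD_eq_getElem _ false (by simpa using hi), List.getElem_ofFn] at this
      exact this
    have : z ∈ Cyl s := by
      intro i hi
      rw [hlen N s hs] at hi
      rw [hzy i (by omega)]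
      exact hys i (by rw [hlen N s hs]; exact hi)
    exact (Finset.mem_filter.1 hs).2 this
  have hcover : O ⊆ ⋃ N, D N := by
    intro y hy
    obtain ⟨I, u, hu, hpi⟩ := isOpen_pi_iff.1 hOopen y hy
    set N := I.sup id + 1 with hN
    refine Set.mem_iUnion.2 ⟨N, hmemD N y ?_⟩
    intro z hz
    apply hpi
    intro i hi
    have hiN : i < N := by
      have := Finset.le_sup (f := id) hi
      simp only [id] at this
      omega
    have := hz i (by simpa [hN] using hiN)
    rw [List.getD_eq_getElem _ false (by simpa [hN] using hiN)] at this
    simp only [List.getElem_ofFn] at this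
    rw [this]
    exact (hu i hi).2
  have hcomp : IsCompact F := hF.isCompact
  obtain ⟨I, hI⟩ := hcomp.elim_finite_subcover D
    (fun N => isOpen_biUnion fun s _ => isOpen_Cyl s)
    (hFO.trans hcover)
  set N0 := I.sup id with hN0
  have hFD : F ⊆ D N0 := by
    refine hI.trans ?_
    apply Set.iUnion₂_subset
    intro n hn
    exact hmono (Finset.le_sup (f := id) hn)
  refine ⟨N0, SN N0, hlen N0, ?_, hFD⟩
  have hmeas : μ (D N0) = ((SN N0).card : ENNReal) * (2 : ENNReal)⁻¹ ^ N0 := by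
    rw [hD]
    rw [measure_biUnion_finset ?_ (fun s _ => measurableSet_Cyl s)]
    · rw [Finset.sum_congr rfl (fun s hs => by rw [meas_Cyl μ hμ s, hlen N0 s hs]),
        Finset.sum_const, nsmul_eq_mul]
    · intro s hs t ht hst
      exact Cyl_disj (hlen N0 s hs) (hlen N0 t ht) hst
  have hlt2 : ((SN N0).card : ENNReal) * (2 : ENNReal)⁻¹ ^ N0 < (2 : ENNReal)⁻¹ ^ m := by
    rw [← hmeas]
    exact (measure_mono (hDsubO N0)).trans_lt hOμ
  by_contra hcon
  push_neg at hcon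
  have := key_pow 1 (SN N0).card N0 m (by omega)
  simp only [Nat.cast_one, one_mul] at this
  exact absurd (this.trans_lt hlt2) (lt_irrefl _)

lemma isClosed_W (m j : ℕ) :
    IsClosed {p : (ℕ → ℕ) × (ℕ → Bool) | p.2 ∈ V m (p.1 j)} := by
  rw [← isOpen_compl_iff]
  have : {p : (ℕ → ℕ) × (ℕ → Bool) | p.2 ∈ V m (p.1 j)}ᶜ
      = ⋃ c : ℕ, ((fun p : (ℕ → ℕ) × (ℕ → Bool) => p.1 j) ⁻¹' {c}) ∩
          (Prod.snd ⁻¹' (V m c)ᶜ) := by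
    ext p
    simp only [Set.mem_compl_iff, Set.mem_setOf_eq, Set.mem_iUnion, Set.mem_inter_iff,
      Set.mem_preimage, Set.mem_singleton_iff]
    constructor
    · intro h
      exact ⟨p.1 j, rfl, h⟩
    · rintro ⟨c, hc, h⟩
      rwa [hc]
  rw [this]
  apply isOpen_iUnion
  intro c
  exact ((isOpen_discrete {c}).preimage ((continuous_apply j).comp continuous_fst)).inter
    ((isClosed_V m c).isOpen_compl.preimage continuous_snd)

end UnivE

open UnivE in
/-- For the Haar (coin-flipping) measure `μ` on `2^ω`, there is an F_σ set
`U ⊆ ω^ω × 2^ω` whose sections all belong to the σ-ideal `E` generated by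
closed null sets, and every member of `E` is contained in some section. -/
theorem exists_Fsigma_universal_E
    (μ : Measure (ℕ → Bool))
    (hμ : ∀ (s : Finset ℕ) (f : ℕ → Bool),
      μ {x : ℕ → Bool | ∀ i ∈ s, x i = f i} = (1 / 2 : ENNReal) ^ s.card) :
    ∃ U : Set ((ℕ → ℕ) × (ℕ → Bool)), IsFsigma U ∧
      (∀ x : ℕ → ℕ, MemClosedNullIdeal μ {y : ℕ → Bool | (x, y) ∈ U}) ∧
      ∀ A : Set (ℕ → Bool), MemClosedNullIdeal μ A →
        ∃ x : ℕ → ℕ, A ⊆ {y : ℕ → Bool | (x, y) ∈ U} := by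
  classical
  haveI : IsFiniteMeasure μ := by
    constructor
    have h := hμ ∅ (fun _ => false)
    have h1 : {x : ℕ → Bool | ∀ i ∈ (∅ : Finset ℕ), x i = (fun _ => false) i} = Set.univ := by
      ext x; simp
    rw [h1] at h
    rw [h]
    simp
  refine ⟨⋃ n : ℕ, ⋂ m : ℕ, {p : (ℕ → ℕ) × (ℕ → Bool) | p.2 ∈ V m (p.1 (Nat.pair n m))},
    ?_, ?_, ?_⟩
  · exact ⟨fun n => ⋂ m : ℕ, {p : (ℕ → ℕ) × (ℕ → Bool) | p.2 ∈ V m (p.1 (Nat.pair n m))},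
      fun n => isClosed_iInter fun m => isClosed_W m (Nat.pair n m), rfl⟩
  · intro x
    refine ⟨fun n => ⋂ m : ℕ, V m (x (Nat.pair n m)), fun n => ⟨?_, ?_⟩, ?_⟩
    · exact isClosed_iInter fun m => isClosed_V m _
    · have hle : ∀ m : ℕ, μ (⋂ m : ℕ, V m (x (Nat.pair n m))) ≤ (2 : ENNReal)⁻¹ ^ m :=
        fun m => (measure_mono (Set.iInter_subset _ m)).trans (meas_V μ hμ m _)
      by_contra h
      obtain ⟨m, hm⟩ := ENNReal.exists_inv_two_pow_lt h
      exact absurd (hle m) (not_le.2 hm)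
    · intro y hy
      simp only [Set.mem_setOf_eq, Set.mem_iUnion, Set.mem_iInter] at hy ⊢
      obtain ⟨n, hn⟩ := hy
      exact ⟨n, fun m => hn m⟩
  · rintro A ⟨G, hG, hA⟩
    have hc : ∀ n m : ℕ, ∃ c : ℕ, G n ⊆ V m c := by
      intro n m
      obtain ⟨N, S, h1, h2, h3⟩ := exists_cover μ hμ (hG n).1 (hG n).2 m
      refine ⟨Encodable.encode ((N, S) : ℕ × Finset (List Bool)), ?_⟩
      have hdec : dec (Encodable.encode ((N, S) : ℕ × Finset (List Bool))) = (N, S) := by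
        unfold dec
        rw [Encodable.encodek]
        rfl
      unfold V
      rw [hdec, if_pos ⟨h1, h2⟩]
      exact h3
    choose c hcV using hc
    refine ⟨fun j => c (Nat.unpair j).1 (Nat.unpair j).2, ?_⟩
    intro y hy
    obtain ⟨n, hn⟩ := Set.mem_iUnion.1 (hA hy)
    simp only [Set.mem_setOf_eq, Set.mem_iUnion, Set.mem_iInter]
    refine ⟨n, fun m => ?_⟩
    rw [Nat.unpair_pair]
    exact hcV n m hn
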